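/- Define g : {0,1} × ℕ × {0,1} → {0,1} × ℕ by g(x,y,ξ) = (1,0) if (x,y) = (1,0), and g(x,y,ξ) = (ξ, y - x + ξ) otherwise. Let 0 < p < α < 1 and set α* = (α-p)/(α(1-p)). If (X,Y,ξ) is distributed as Ber(α) ⊗ (Geo(α*)-1) ⊗ Ber(p), where Geo(α*)-1 is the measure on ℕ with P(k) = α*(1-α*)^k for k ≥ 0, then g(X,Y,ξ) is distributed as Ber(α) ⊗ (Geo(α*)-1). -/

import Mathlib

open MeasureTheory

/-- Bernoulli measure on `{0,1}` (modeled as `Bool`), giving mass `q` to `1 = true`. -/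
noncomputable def ber (q : ℝ) : Measure Bool :=
  ENNReal.ofReal (1 - q) • Measure.dirac false + ENNReal.ofReal q • Measure.dirac true

/-- The shifted geometric measure on `ℕ`: `P(k) = a (1-a)^k` for `k ≥ 0`. -/
noncomputable def geoShift (a : ℝ) : Measure ℕ :=
  Measure.sum (fun k => ENNReal.ofReal (a * (1 - a) ^ k) • Measure.dirac k)

/-- The local update map of Model 2: `g(x,y,ξ) = (1,0)` if `(x,y) = (1,0)`,
and `g(x,y,ξ) = (ξ, y - x + ξ)` otherwise. -/
def hamUpdate2 : Bool × ℕ × Bool → Bool × ℕ := fun ⟨x, y, ξ⟩ =>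
  if x = true ∧ y = 0 then (true, 0)
  else (ξ, y - (if x then 1 else 0) + (if ξ then 1 else 0))

instance (q : ℝ) : SFinite (ber q) := by unfold ber; infer_instance
instance (a : ℝ) : SFinite (geoShift a) := by unfold geoShift; infer_instance

lemma ber_true (q : ℝ) : ber q {true} = ENNReal.ofReal q := by
  simp [ber]

lemma ber_false (q : ℝ) : ber q {false} = ENNReal.ofReal (1 - q) := by
  simp [ber]

lemma geoShift_singleton (a : ℝ) (k : ℕ) :
    geoShift a {k} = ENNReal.ofReal (a * (1 - a) ^ k) := by
  rw [geoShift, Measure.sum_apply _ (measurableSet_singleton k)]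
  rw [tsum_eq_single k]
  · simp
  · intro j hj
    simp [Measure.dirac_apply, Set.indicator_apply, hj]

lemma prod3_singleton (μ : Measure Bool) (ν : Measure ℕ) (ρ : Measure Bool)
    [SFinite ν] [SFinite ρ] (x : Bool) (y : ℕ) (ξ : Bool) :
    (μ.prod (ν.prod ρ)) {(x, y, ξ)} = μ {x} * (ν {y} * ρ {ξ}) := by
  have h : ({(x, y, ξ)} : Set (Bool × ℕ × Bool)) = {x} ×ˢ ({y} ×ˢ {ξ}) := by
    rw [Set.singleton_prod_singleton, Set.singleton_prod_singleton]
  rw [h, Measure.prod_prod, Measure.prod_prod]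

theorem local_balance_model2 (p α αs : ℝ) (hp : 0 < p) (hpa : p < α) (ha1 : α < 1)
    (hαs : αs = (α - p) / (α * (1 - p))) :
    ((ber α).prod ((geoShift αs).prod (ber p))).map hamUpdate2
      = (ber α).prod (geoShift αs) := by
  have hα0 : 0 < α := hp.trans hpa
  have hp1 : p < 1 := hpa.trans ha1
  have hden : 0 < α * (1 - p) := mul_pos hα0 (by linarith)
  have hαs0 : 0 ≤ αs := by
    rw [hαs]; exact div_nonneg (by linarith) hden.le
  have hαs1 : αs < 1 := by
    rw [hαs, div_lt_one hden]; nlinarith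
  have h1αs : (0:ℝ) ≤ 1 - αs := by linarith
  have key : α * (1 - αs) * (1 - p) = p * (1 - α) := by
    rw [hαs]
    field_simp [hα0.ne', (sub_pos.mpr hp1).ne']
    ring
  have hA : (0:ℝ) ≤ α := hα0.le
  have hA1 : (0:ℝ) ≤ 1 - α := by linarith
  have hP : (0:ℝ) ≤ p := hp.le
  have hP1 : (0:ℝ) ≤ 1 - p := by linarith
  have hv : ∀ n : ℕ, (0:ℝ) ≤ αs * (1 - αs) ^ n := fun n => by positivity
  rw [Measure.ext_iff_singleton]
  rintro ⟨b, n⟩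
  rw [Measure.map_apply (measurable_of_countable _) (measurableSet_singleton _)]
  have hRHS : ((ber α).prod (geoShift αs)) {(b, n)} = ber α {b} * geoShift αs {n} := by
    rw [← Set.singleton_prod_singleton, Measure.prod_prod]
  rw [hRHS]
  have pairmeas : ∀ (a c : Bool × ℕ × Bool), a ≠ c →
      ((ber α).prod ((geoShift αs).prod (ber p))) {a, c}
        = ((ber α).prod ((geoShift αs).prod (ber p))) {a}
          + ((ber α).prod ((geoShift αs).prod (ber p))) {c} := by
    intro a c hne
    rw [Set.insert_eq, measure_union (by simpa using hne) (measurableSet_singleton _)]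
  match b, n with
  | false, n =>
    have hpre : hamUpdate2 ⁻¹' {((false : Bool), n)}
        = {((false : Bool), n, (false : Bool)), (true, n + 1, false)} := by
      ext ⟨x, y, ξ⟩
      cases x <;> cases ξ <;> rcases y with _ | y <;>
        simp [hamUpdate2, Prod.ext_iff] <;> omega
    rw [hpre, pairmeas _ _ (by simp), prod3_singleton, prod3_singleton,
      ber_true, ber_false, ber_false, geoShift_singleton, geoShift_singleton]
    rw [← ENNReal.ofReal_mul (hv n), ← ENNReal.ofReal_mul (hv (n+1)),
        ← ENNReal.ofReal_mul hA1, ← ENNReal.ofReal_mul hA,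
        ← ENNReal.ofReal_mul hA1,
        ← ENNReal.ofReal_add (mul_nonneg hA1 (mul_nonneg (hv n) hP1))
          (mul_nonneg hA (mul_nonneg (hv (n+1)) hP1))]
    exact congrArg ENNReal.ofReal (by linear_combination (αs * (1 - αs) ^ n) * key)
  | true, 0 =>
    have hpre : hamUpdate2 ⁻¹' {((true : Bool), 0)}
        = {((true : Bool), 0, (false : Bool)), (true, 0, true)} := by
      ext ⟨x, y, ξ⟩
      cases x <;> cases ξ <;> rcases y with _ | y <;>
        simp [hamUpdate2, Prod.ext_iff] <;> omega
    rw [hpre, pairmeas _ _ (by simp), prod3_singleton, prod3_singleton,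
      ber_true, ber_true, ber_false, geoShift_singleton]
    rw [← ENNReal.ofReal_mul (hv 0), ← ENNReal.ofReal_mul (hv 0),
        ← ENNReal.ofReal_mul hA, ← ENNReal.ofReal_mul hA, ← ENNReal.ofReal_mul hA,
        ← ENNReal.ofReal_add (mul_nonneg hA (mul_nonneg (hv 0) hP1))
          (mul_nonneg hA (mul_nonneg (hv 0) hP))]
    exact congrArg ENNReal.ofReal (by ring)
  | true, (k + 1) =>
    have hpre : hamUpdate2 ⁻¹' {((true : Bool), k + 1)}
        = {((false : Bool), k, (true : Bool)), (true, k + 1, true)} := by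
      ext ⟨x, y, ξ⟩
      cases x <;> cases ξ <;> rcases y with _ | y <;>
        simp [hamUpdate2, Prod.ext_iff] <;> omega
    rw [hpre, pairmeas _ _ (by simp), prod3_singleton, prod3_singleton,
      ber_true, ber_true, ber_false, geoShift_singleton, geoShift_singleton]
    rw [← ENNReal.ofReal_mul (hv k), ← ENNReal.ofReal_mul (hv (k+1)),
        ← ENNReal.ofReal_mul hA1, ← ENNReal.ofReal_mul hA,
        ← ENNReal.ofReal_mul hA,
        ← ENNReal.ofReal_add (mul_nonneg hA1 (mul_nonneg (hv k) hP))
          (mul_nonneg hA (mul_nonneg (hv (k+1)) hP))]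
    exact congrArg ENNReal.ofReal (by linear_combination (-(αs * (1 - αs) ^ k)) * key)
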